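/- For every integer k ≥ 1 and complex z with |z| < 1, Σ_{n≥0} C(2n+2k, n) z^n / 4^n = (4^k / √(1-z)) · 1/(1+√(1-z))^{2k}. -/

import Mathlib

open Complex

open Finset Polynomial Metric


lemma smeval_descPochhammer_rat (n : ℕ) (q : ℚ) :
    (descPochhammer ℤ n).smeval q = (descPochhammer ℚ n).eval q := by
  rw [← Polynomial.eval₂_smulOneHom_eq_smeval,
    show (RingHom.smulOneHom : ℤ →+* ℚ) = Int.castRingHom ℚ from Subsingleton.elim _ _,
    eval₂_eq_eval_map, descPochhammer_map]

lemma descPochhammer_eval_neg_half (n : ℕ) :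
    4^n * (descPochhammer ℚ n).eval (-(1/2)) = (-1)^n * (Nat.centralBinom n) * n.factorial := by
  induction n with
  | zero => simp
  | succ n ih =>
    have h' : ((n:ℚ)+1) * (Nat.centralBinom (n+1)) = 2 * (2*n+1) * Nat.centralBinom n := by
      exact_mod_cast congrArg (Nat.cast : ℕ → ℚ) (Nat.succ_mul_centralBinom_succ n)
    rw [descPochhammer_succ_eval]
    push_cast [Nat.factorial_succ]
    linear_combination (4*(-(1/2:ℚ)-n))*ih + (-1:ℚ)^n*(n.factorial:ℚ)*h'

lemma descPochhammer_eval_neg_one (n : ℕ) :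
    (descPochhammer ℚ n).eval (-1) = (-1)^n * n.factorial := by
  induction n with
  | zero => simp
  | succ n ih =>
    rw [descPochhammer_succ_eval, ih]
    push_cast [Nat.factorial_succ]
    ring

lemma centralBinom_conv (n : ℕ) :
    ∑ ij ∈ antidiagonal n, Nat.centralBinom ij.1 * Nat.centralBinom ij.2 = 4 ^ n := by
  have key := Ring.descPochhammer_smeval_add (R := ℚ) (r := -(1/2)) (s := -(1/2)) n (Commute.all _ _)
  rw [show (-(1/2) + -(1/2) : ℚ) = -1 by norm_num] at key
  rw [smeval_descPochhammer_rat, descPochhammer_eval_neg_one] at key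
  have key2 : ((-1:ℚ))^n * n.factorial * (4:ℚ)^n
      = ((-1:ℚ))^n * n.factorial * ∑ ij ∈ antidiagonal n, ((Nat.centralBinom ij.1 : ℚ) * Nat.centralBinom ij.2) := by
    calc ((-1:ℚ))^n * n.factorial * (4:ℚ)^n
        = ∑ ij ∈ antidiagonal n, (4:ℚ)^n * ((Nat.choose n ij.1 : ℚ) *
            ((descPochhammer ℤ ij.1).smeval (-(1/2):ℚ) * (descPochhammer ℤ ij.2).smeval (-(1/2):ℚ))) := by
          rw [← Finset.mul_sum, ← key]; ring
      _ = ∑ ij ∈ antidiagonal n, ((-1:ℚ))^n * n.factorial * ((Nat.centralBinom ij.1 : ℚ) * Nat.centralBinom ij.2) := by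
          refine Finset.sum_congr rfl fun ij hij => ?_
          have hsum : ij.1 + ij.2 = n := by simpa using hij
          have hle : ij.1 ≤ n := by omega
          have hfacQ : (Nat.choose n ij.1 : ℚ) * ij.1.factorial * ij.2.factorial = n.factorial := by
            have := Nat.choose_mul_factorial_mul_factorial hle
            rw [show n - ij.1 = ij.2 by omega] at this
            exact_mod_cast congrArg (Nat.cast : ℕ → ℚ) this
          have h1 := descPochhammer_eval_neg_half ij.1
          have h2 := descPochhammer_eval_neg_half ij.2
          have hp4 : (4:ℚ)^n = 4^ij.1 * 4^ij.2 := by rw [← pow_add, hsum]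
          have hp1 : ((-1:ℚ))^n = (-1)^ij.1 * (-1)^ij.2 := by rw [← pow_add, hsum]
          rw [smeval_descPochhammer_rat, smeval_descPochhammer_rat, hp4, hp1]
          set A := (descPochhammer ℚ ij.1).eval (-(1/2):ℚ)
          set B := (descPochhammer ℚ ij.2).eval (-(1/2):ℚ)
          linear_combination ((Nat.choose n ij.1 : ℚ)*B*4^ij.2)*h1
            + ((-1:ℚ)^ij.1*(Nat.centralBinom ij.1)*(ij.1.factorial)*(Nat.choose n ij.1 : ℚ))*h2
            + ((-1:ℚ)^ij.1*(-1)^ij.2*(Nat.centralBinom ij.1)*(Nat.centralBinom ij.2))*hfacQ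
      _ = ((-1:ℚ))^n * n.factorial * ∑ ij ∈ antidiagonal n, ((Nat.centralBinom ij.1 : ℚ) * Nat.centralBinom ij.2) := by
          rw [Finset.mul_sum]
  have hne : ((-1:ℚ))^n * n.factorial ≠ 0 := by
    apply mul_ne_zero (pow_ne_zero _ (by norm_num))
    exact_mod_cast Nat.factorial_ne_zero n
  have := mul_left_cancel₀ hne key2
  exact_mod_cast this.symm

noncomputable def fcb (w : ℂ) : ℂ := ∑' n : ℕ, (Nat.centralBinom n : ℂ) * w ^ n / 4 ^ n

lemma cb_le_four_pow (n : ℕ) : Nat.centralBinom n ≤ 4 ^ n :=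
  le_trans (Nat.choose_le_choose n (by omega : 2*n ≤ 2*n+1)) (Nat.choose_middle_le_pow n)

lemma norm_term_le (w : ℂ) (n : ℕ) :
    ‖(Nat.centralBinom n : ℂ) * w ^ n / 4 ^ n‖ ≤ ‖w‖ ^ n := by
  rw [norm_div, norm_mul, norm_pow, norm_pow]
  have h4 : ‖(4:ℂ)‖ = 4 := by norm_num
  have hcb : ‖(Nat.centralBinom n : ℂ)‖ = (Nat.centralBinom n : ℝ) := by
    simp [Complex.norm_natCast]
  rw [h4, hcb]
  rw [div_le_iff₀ (by positivity)]
  have : (Nat.centralBinom n : ℝ) ≤ 4 ^ n := by exact_mod_cast cb_le_four_pow n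
  calc (Nat.centralBinom n : ℝ) * ‖w‖ ^ n ≤ 4 ^ n * ‖w‖ ^ n := by
        apply mul_le_mul_of_nonneg_right this (by positivity)
    _ = ‖w‖ ^ n * 4 ^ n := by ring

lemma summable_norm_cb {w : ℂ} (hw : ‖w‖ < 1) :
    Summable (fun n : ℕ => ‖(Nat.centralBinom n : ℂ) * w ^ n / 4 ^ n‖) :=
  Summable.of_nonneg_of_le (fun n => norm_nonneg _) (fun n => norm_term_le w n)
    (summable_geometric_of_lt_one (norm_nonneg w) hw)

lemma hasSum_fcb {w : ℂ} (hw : ‖w‖ < 1) :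
    HasSum (fun n : ℕ => (Nat.centralBinom n : ℂ) * w ^ n / 4 ^ n) (fcb w) :=
  (summable_norm_cb hw).of_norm.hasSum

lemma fcb_sq {w : ℂ} (hw : ‖w‖ < 1) : fcb w * fcb w * (1 - w) = 1 := by
  have hs := summable_norm_cb hw
  have hc := hasSum_sum_range_mul_of_summable_norm hs hs
  have hterm : ∀ n : ℕ, (∑ k ∈ range (n+1),
      ((Nat.centralBinom k : ℂ) * w ^ k / 4 ^ k) *
      ((Nat.centralBinom (n-k) : ℂ) * w ^ (n-k) / 4 ^ (n-k))) = w ^ n := by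
    intro n
    have : ∀ k ∈ range (n+1),
        ((Nat.centralBinom k : ℂ) * w ^ k / 4 ^ k) *
        ((Nat.centralBinom (n-k) : ℂ) * w ^ (n-k) / 4 ^ (n-k))
        = ((Nat.centralBinom k * Nat.centralBinom (n-k) : ℕ) : ℂ) * w ^ n / 4 ^ n := by
      intro k hk
      have hk' : k ≤ n := by simpa using Nat.lt_succ_iff.mp (mem_range.mp hk)
      push_cast
      rw [show w ^ n = w ^ k * w ^ (n-k) by rw [← pow_add]; congr 1; omega,
        show (4:ℂ) ^ n = 4 ^ k * 4 ^ (n-k) by rw [← pow_add]; congr 1; omega]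
      field_simp
    rw [Finset.sum_congr rfl this, ← Finset.sum_div, ← Finset.sum_mul, ← Nat.cast_sum]
    rw [← Finset.Nat.sum_antidiagonal_eq_sum_range_succ (fun i j => Nat.centralBinom i * Nat.centralBinom j)]
    rw [centralBinom_conv n]
    push_cast
    field_simp
  rw [funext hterm] at hc
  have hg := hasSum_geometric_of_norm_lt_one hw
  have := hg.unique hc
  have h1w : (1:ℂ) - w ≠ 0 := by
    intro h
    have : w = 1 := by linear_combination -h
    rw [this] at hw; norm_num at hw
  rw [(hasSum_fcb hw).tsum_eq] at this
  rw [← this, inv_mul_cancel₀ h1w]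

lemma continuousOn_fcb : ContinuousOn fcb (ball (0:ℂ) 1) := by
  intro x hx
  rw [mem_ball_zero_iff] at hx
  set r : ℝ := (1 + ‖x‖)/2 with hr
  have hr0 : 0 ≤ r := by positivity
  have hr1 : r < 1 := by rw [hr]; linarith
  have hxr : ‖x‖ < r := by rw [hr]; linarith [norm_nonneg x]
  have hcont : ContinuousOn fcb (closedBall (0:ℂ) r) := by
    apply continuousOn_tsum (u := fun n => r ^ n)
    · intro i
      exact ((continuous_const.mul (continuous_pow i)).div_const _).continuousOn
    · exact summable_geometric_of_lt_one hr0 hr1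
    · intro n y hy
      rw [mem_closedBall_zero_iff] at hy
      exact le_trans (norm_term_le y n) (pow_le_pow_left₀ (norm_nonneg y) hy n)
  exact (hcont.continuousAt (closedBall_mem_nhds_of_mem (by simpa [mem_ball_zero_iff] using hxr))).continuousWithinAt

lemma continuousOn_sqrt : ContinuousOn (fun w : ℂ => (1 - w) ^ ((1:ℂ)/2)) (ball (0:ℂ) 1) := by
  intro x hx
  rw [mem_ball_zero_iff] at hx
  have hre : 0 < (1 - x).re := by
    have := Complex.abs_re_le_norm x
    simp only [sub_re, one_re]
    have : |x.re| < 1 := lt_of_le_of_lt (Complex.abs_re_le_norm x) hx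
    cases' abs_lt.mp this with h1 h2
    linarith
  exact (((continuous_const.sub continuous_id).continuousAt).cpow continuousAt_const
    (Or.inl hre)).continuousWithinAt

lemma fcb_eq {w : ℂ} (hw : ‖w‖ < 1) : fcb w = (((1 - w) ^ ((1:ℂ)/2)))⁻¹ := by
  set B := ball (0:ℂ) 1
  have hpc : PreconnectedSpace B :=
    isPreconnected_iff_preconnectedSpace.mp (convex_ball (0:ℂ) 1).isPreconnected
  set g : ℂ → ℂ := fun w => fcb w * (1 - w) ^ ((1:ℂ)/2) with hg
  have hu2 : ∀ y : ℂ, ‖y‖ < 1 → ((1 - y) ^ ((1:ℂ)/2)) ^ 2 = 1 - y := by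
    intro y hy
    have h1y : (1:ℂ) - y ≠ 0 := by
      intro h
      have : y = 1 := by linear_combination -h
      rw [this] at hy; norm_num at hy
    rw [sq, ← cpow_add _ _ h1y]
    norm_num
  have hpm : ∀ y : ℂ, ‖y‖ < 1 → g y = 1 ∨ g y = -1 := by
    intro y hy
    have : g y * g y = 1 := by
      have h2 := fcb_sq hy
      have h3 := hu2 y hy
      rw [hg]
      simp only
      calc fcb y * (1 - y) ^ ((1:ℂ)/2) * (fcb y * (1 - y) ^ ((1:ℂ)/2))
          = fcb y * fcb y * (((1 - y) ^ ((1:ℂ)/2)) ^ 2) := by ring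
        _ = fcb y * fcb y * (1 - y) := by rw [h3]
        _ = 1 := h2
    exact mul_self_eq_one_iff.mp this
  have hGc : Continuous (fun x : B => g x) :=
    continuousOn_iff_continuous_restrict.mp (continuousOn_fcb.mul continuousOn_sqrt)
  set S : Set B := (fun x : B => g x) ⁻¹' {1} with hS
  have hSclosed : IsClosed S := IsClosed.preimage hGc isClosed_singleton
  have hSopen : IsOpen S := by
    have : S = (fun x : B => g x) ⁻¹' (ball (1:ℂ) 1) := by
      ext y
      have hy : ‖(y:ℂ)‖ < 1 := mem_ball_zero_iff.mp y.2
      rcases hpm y hy with h | h <;>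
        simp [hS, h, mem_ball, dist_eq_norm] <;> norm_num
    rw [this]
    exact hGc.isOpen_preimage _ isOpen_ball
  have hzero : (0:ℂ) ∈ B := by simp [B]
  have hfcb0 : fcb 0 = 1 := by
    have h := hasSum_fcb (by norm_num : ‖(0:ℂ)‖ < 1)
    have h' : HasSum (fun n : ℕ => (Nat.centralBinom n : ℂ) * (0:ℂ) ^ n / 4 ^ n)
        (((Nat.centralBinom 0 : ℂ) * (0:ℂ) ^ 0 / 4 ^ 0)) := by
      apply hasSum_single 0
      intro b hb
      simp [zero_pow hb]
    have := h.unique h'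
    simpa [Nat.centralBinom] using this
  have hSne : S.Nonempty := by
    refine ⟨⟨0, hzero⟩, ?_⟩
    simp [hS, hg, hfcb0, one_cpow]
  have := IsClopen.eq_univ ⟨hSclosed, hSopen⟩ hSne
  have hgw : g w = 1 := by
    have hwB : w ∈ B := mem_ball_zero_iff.mpr hw
    have : (⟨w, hwB⟩ : B) ∈ S := by rw [this]; trivial
    simpa [hS] using this
  have hune : (1 - w) ^ ((1:ℂ)/2) ≠ 0 := by
    intro h
    have := hu2 w hw
    rw [h] at this
    have h1w : (1:ℂ) - w ≠ 0 := by
      intro h'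
      have : w = 1 := by linear_combination -h'
      rw [this] at hw; norm_num at hw
    simp at this
    exact h1w this.symm
  field_simp
  rw [hg] at hgw
  simpa using hgw

lemma hasSum_offset {z : ℂ} (hz : ‖z‖ < 1) (hz0 : z ≠ 0) (m : ℕ) :
    HasSum (fun n : ℕ => ((2 * n + m).choose n : ℂ) * z ^ n / 4 ^ n)
      ((2:ℂ) ^ m / ((1 - z) ^ ((1:ℂ)/2) * (1 + (1 - z) ^ ((1:ℂ)/2)) ^ m)) := by
  have h1z : (1:ℂ) - z ≠ 0 := by
    intro h
    have : z = 1 := by linear_combination -h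
    rw [this] at hz; norm_num at hz
  set u : ℂ := (1 - z) ^ ((1:ℂ)/2) with hu
  have hu2 : u ^ 2 = 1 - z := by
    rw [hu, sq, ← cpow_add _ _ h1z]; norm_num
  have hu0 : u ≠ 0 := by
    rw [hu, Complex.cpow_def_of_ne_zero h1z]; exact Complex.exp_ne_zero _
  have hum : 1 - u ≠ 0 := by
    intro h
    have : u = 1 := by linear_combination -h
    rw [this] at hu2
    exact hz0 (by linear_combination hu2)
  have hup : 1 + u ≠ 0 := by
    intro h
    have : u = -1 := by linear_combination h
    rw [this] at hu2
    exact hz0 (by linear_combination hu2)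
  have hzf : z = (1 - u) * (1 + u) := by linear_combination hu2
  induction m using Nat.twoStepInduction with
  | zero =>
    have h := hasSum_fcb hz
    rw [fcb_eq hz] at h
    have heq : (fun n : ℕ => ((2 * n + 0).choose n : ℂ) * z ^ n / 4 ^ n)
        = fun n : ℕ => (Nat.centralBinom n : ℂ) * z ^ n / 4 ^ n := by
      funext n; simp [Nat.centralBinom]
    rw [heq]
    simpa [hu] using h
  | one =>
    have h := hasSum_fcb hz
    rw [fcb_eq hz, ← hu] at h
    have hshift := (hasSum_nat_add_iff' 1).mpr h
    have hmul := hshift.mul_left (2 / z)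
    have heq : (fun n : ℕ => 2 / z * ((Nat.centralBinom (n+1) : ℂ) * z ^ (n+1) / 4 ^ (n+1)))
        = fun n : ℕ => ((2 * n + 1).choose n : ℂ) * z ^ n / 4 ^ n := by
      funext n
      have hnat : Nat.centralBinom (n+1) = 2 * ((2 * n + 1).choose n) := by
        have h1 : Nat.centralBinom (n+1) = (2*n+1).choose n + (2*n+1).choose (n+1) := by
          rw [Nat.centralBinom, show 2*(n+1) = (2*n+1)+1 by ring]
          exact Nat.choose_succ_succ _ _
        have h2 : (2*n+1).choose (n+1) = (2*n+1).choose n := by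
          have := Nat.choose_symm (show n+1 ≤ 2*n+1 by omega)
          rw [show 2*n+1-(n+1) = n by omega] at this
          exact this.symm
        omega
      rw [hnat]
      push_cast
      field_simp
      ring
    rw [heq] at hmul
    convert hmul using 1
    · rfl
    have hs : ∑ i ∈ range 1, (Nat.centralBinom i : ℂ) * z ^ i / 4 ^ i = 1 := by
      simp [Nat.centralBinom]
    rw [hs, hzf]
    field_simp
  | more m ihm ihm1 =>
    have hshift1 := (hasSum_nat_add_iff' 1).mpr ihm1
    have hshift0 := (hasSum_nat_add_iff' 1).mpr ihm
    have hsub := hshift1.sub hshift0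
    have hmul := hsub.mul_left (4 / z)
    have heq : (fun n : ℕ =>
        4 / z * ((((2 * (n+1) + (m+1)).choose (n+1) : ℂ) * z ^ (n+1) / 4 ^ (n+1))
          - (((2 * (n+1) + m).choose (n+1) : ℂ) * z ^ (n+1) / 4 ^ (n+1))))
        = fun n : ℕ => ((2 * n + (m+2)).choose n : ℂ) * z ^ n / 4 ^ n := by
      funext n
      have hnat : (2 * (n+1) + (m+1)).choose (n+1)
          = (2 * (n+1) + m).choose (n+1) + (2 * n + (m+2)).choose n := by
        rw [show 2*(n+1)+(m+1) = (2*n+(m+2))+1 by ring]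
        rw [show 2*(n+1)+m = 2*n+(m+2) by ring]
        have hp := Nat.choose_succ_succ (2*n+(m+2)) n
        simp only [Nat.succ_eq_add_one] at hp
        omega
      rw [hnat]
      push_cast
      field_simp
      ring
    rw [heq] at hmul
    convert hmul using 1
    · rfl
    have hs1 : ∑ i ∈ range 1, ((2 * i + (m+1)).choose i : ℂ) * z ^ i / 4 ^ i = 1 := by simp
    have hs0 : ∑ i ∈ range 1, ((2 * i + m).choose i : ℂ) * z ^ i / 4 ^ i = 1 := by simp
    rw [hs1, hs0, hzf, sub_sub_sub_cancel_right]
    field_simp [hu0, hup, hum]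
    ring

/-- For every `k ≥ 1` and `‖z‖ < 1`,
`∑_{n≥0} C(2n+2k, n) zⁿ/4ⁿ = 4^k / (√(1-z) (1+√(1-z))^{2k})` (principal branch). -/
theorem stmt4 (k : ℕ) (hk : 1 ≤ k) (z : ℂ) (hz : ‖z‖ < 1) :
    HasSum (fun n : ℕ => ((2 * n + 2 * k).choose n : ℂ) * z ^ n / 4 ^ n)
      ((4 : ℂ) ^ k / ((1 - z) ^ ((1 : ℂ) / 2) * (1 + (1 - z) ^ ((1 : ℂ) / 2)) ^ (2 * k))) := by
  by_cases hz0 : z = 0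
  · subst hz0
    have h : HasSum (fun n : ℕ => ((2 * n + 2 * k).choose n : ℂ) * (0:ℂ) ^ n / 4 ^ n)
        (((2 * 0 + 2 * k).choose 0 : ℂ) * (0:ℂ) ^ 0 / 4 ^ 0) := by
      apply hasSum_single 0
      intro b hb
      simp [zero_pow hb]
    simp only [Nat.choose_zero_right, Nat.cast_one, pow_zero, one_mul, mul_one, div_one] at h
    convert h using 1
    rw [sub_zero, one_cpow]
    rw [show (1:ℂ) + 1 = 2 by norm_num, show ((2:ℂ))^(2*k) = 4^k from by rw [pow_mul]; norm_num,
      one_mul, div_self (pow_ne_zero _ (by norm_num : (4:ℂ) ≠ 0))]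
  · have h := hasSum_offset hz hz0 (2*k)
    rwa [show ((2:ℂ))^(2*k) = 4^k from by rw [pow_mul]; norm_num] at h
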